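/- Let (h_ℓ)_{ℓ≥1} be deterministic fields on the grid U such that inf_{ℓ≥1} Σ_{x∈U} d_x^int h_ℓ(x)² > 0, 𝓔_int(h_ℓ) > 0 for every ℓ, and 𝓔_int(h_ℓ) → 0 as ℓ → ∞. Then for every fixed q∈(0,1), under inverted dropout with keep probability q, the relative expected intrinsic distortion diverges: (𝔼[𝓔_int(m_q ⊙ h_ℓ)] − 𝓔_int(h_ℓ)) / 𝓔_int(h_ℓ) → +∞ as ℓ → ∞. -/

import Mathlib

open MeasureTheory Real Filter

noncomputable section
/-- A point of the `H × W` feature grid `U = {1,…,H} × {1,…,W}` (0-indexed model). -/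
abbrev GridPt (H W : ℕ) := Fin H × Fin W

/-- Embedding of the grid into `ℤ × ℤ` with coordinates in `{1,…,H} × {1,…,W}`. -/
def gridZ {H W : ℕ} (x : GridPt H W) : ℤ × ℤ := ((x.1 : ℤ) + 1, (x.2 : ℤ) + 1)

/-- Nearest-neighbor adjacency on `ℤ × ℤ`: `ℓ¹`-distance one. -/
def adjZ (p q : ℤ × ℤ) : Bool := |p.1 - q.1| + |p.2 - q.2| == 1

/-- The Dirichlet Laplacian matrix on the grid `U` with edge weights `c` and zero
(auxiliary Dirichlet) boundary: `(L_U φ)(x) = ∑_{y : {x,y} ∈ E} c_{xy} (φ(x) − φ̄(y))`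
where `φ̄` extends `φ` by zero outside `U`. -/
def dirichletLap (H W : ℕ) (c : ℤ × ℤ → ℤ × ℤ → ℝ) :
    Matrix (GridPt H W) (GridPt H W) ℝ := fun x y =>
  if x = y then
    ((([((1 : ℤ), (0 : ℤ)), (-1, 0), (0, 1), (0, -1)] : List (ℤ × ℤ)).map
      (fun d => c (gridZ x) (gridZ x + d))).sum)
  else if adjZ (gridZ x) (gridZ y) then -c (gridZ x) (gridZ y) else 0
/-- Intrinsic energy `𝓔_int(f) = (1/2) ∑_{{x,y} ∈ E_int} c_{xy} (f(x) − f(y))²`,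
written as `1/4` times the sum over ordered adjacent pairs in `U`. -/
def Eint {H W : ℕ} (c : ℤ × ℤ → ℤ × ℤ → ℝ) (f : GridPt H W → ℝ) : ℝ :=
  (1 / 4) * ∑ x : GridPt H W, ∑ y : GridPt H W,
    if adjZ (gridZ x) (gridZ y) then c (gridZ x) (gridZ y) * (f x - f y) ^ 2 else 0

/-- Intrinsic weighted degree `d_x^int = ∑_{y : {x,y} ∈ E_int} c_{xy}`. -/
def dInt {H W : ℕ} (c : ℤ × ℤ → ℤ × ℤ → ℝ) (x : GridPt H W) : ℝ :=
  ∑ y : GridPt H W, if adjZ (gridZ x) (gridZ y) then c (gridZ x) (gridZ y) else 0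

/-- Interior (intrinsic) graph Laplacian `L_int` on `U`, with no boundary term. -/
def Lint (H W : ℕ) (c : ℤ × ℤ → ℤ × ℤ → ℝ) :
    Matrix (GridPt H W) (GridPt H W) ℝ := fun x y =>
  if x = y then dInt c x
  else if adjZ (gridZ x) (gridZ y) then -c (gridZ x) (gridZ y) else 0
/-- Inverted-dropout mask `m_q(x) = b(x)/q` built from a Boolean keep pattern `ω`. -/
def maskD {ι : Type*} (q : ℝ) (ω : ι → Bool) (x : ι) : ℝ :=
  (if ω x then (1 : ℝ) else 0) / q

/-- The law of i.i.d. `Bernoulli(q)` keep variables indexed by `ι`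
(the canonical product measure, i.e. i.i.d. coordinates). -/
def bernoulliPi (ι : Type*) [Fintype ι] (q : ℝ) (hq : q ≤ 1) :
    MeasureTheory.Measure (ι → Bool) :=
  MeasureTheory.Measure.pi fun _ =>
    (PMF.bernoulli (Real.toNNReal q) (Real.toNNReal_le_one.mpr hq)).toMeasure

section Aux
set_option linter.unusedSectionVars false
variable {ι : Type*} [Fintype ι] [DecidableEq ι]

lemma bern_integral (q : ℝ) (hq0 : 0 ≤ q) (hq : q ≤ 1) (g : Bool → ℝ) :
    ∫ b, g b ∂((PMF.bernoulli (Real.toNNReal q) (Real.toNNReal_le_one.mpr hq)).toMeasure)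
      = q * g true + (1 - q) * g false := by
  rw [PMF.integral_eq_sum]
  simp only [Fintype.sum_bool, PMF.bernoulli_apply, Bool.cond_true, Bool.cond_false,
    smul_eq_mul]
  rw [ENNReal.coe_toReal, ENNReal.coe_toReal, NNReal.coe_sub (Real.toNNReal_le_one.mpr hq),
    Real.coe_toNNReal _ hq0]
  simp

lemma bernoulliPi_prod (q : ℝ) (hq : q ≤ 1) (f : ι → Bool → ℝ) :
    ∫ ω, ∏ i, f i (ω i) ∂(bernoulliPi ι q hq)
      = ∏ i, ∫ b, f i b
          ∂((PMF.bernoulli (Real.toNNReal q) (Real.toNNReal_le_one.mpr hq)).toMeasure) := by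
  letI : MeasureSpace Bool :=
    ⟨(PMF.bernoulli (Real.toNNReal q) (Real.toNNReal_le_one.mpr hq)).toMeasure⟩
  haveI : SigmaFinite (volume : Measure Bool) :=
    inferInstanceAs (SigmaFinite
      ((PMF.bernoulli (Real.toNNReal q) (Real.toNNReal_le_one.mpr hq)).toMeasure))
  exact MeasureTheory.integral_fintype_prod_eq_prod f

instance bernoulliPi_prob (q : ℝ) (hq : q ≤ 1) : IsProbabilityMeasure (bernoulliPi ι q hq) := by
  unfold bernoulliPi; infer_instance

lemma integral_maskD_sq (q : ℝ) (hq0 : 0 < q) (hq : q ≤ 1) (x : ι) :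
    ∫ ω, (maskD q ω x) ^ 2 ∂(bernoulliPi ι q hq) = 1 / q := by
  set f : ι → Bool → ℝ := fun i b =>
    if i = x then ((if b then (1:ℝ) else 0)/q)^2 else 1 with hf
  have h : ∀ ω : ι → Bool, (maskD q ω x) ^ 2 = ∏ i, f i (ω i) := fun ω => by
    rw [hf, Finset.prod_eq_single x (fun i _ hi => by simp [hi]) (by simp)]
    simp [maskD]
  calc ∫ ω, (maskD q ω x) ^ 2 ∂(bernoulliPi ι q hq)
      = ∫ ω, ∏ i, f i (ω i) ∂(bernoulliPi ι q hq) := by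
        congr 1; funext ω; exact h ω
    _ = ∏ i, ∫ b, f i b
          ∂((PMF.bernoulli (Real.toNNReal q) (Real.toNNReal_le_one.mpr hq)).toMeasure) :=
        bernoulliPi_prod q hq f
    _ = 1 / q := by
        rw [Finset.prod_eq_single x
          (fun i _ hi => by
            rw [bern_integral q hq0.le hq]; simp only [hf, if_neg hi]; ring)
          (by simp)]
        rw [bern_integral q hq0.le hq]
        simp only [hf, if_pos rfl, if_true, if_false, Bool.false_eq_true]
        field_simp
        ring

lemma integral_maskD_mul (q : ℝ) (hq0 : 0 < q) (hq : q ≤ 1) {x y : ι} (hxy : x ≠ y) :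
    ∫ ω, maskD q ω x * maskD q ω y ∂(bernoulliPi ι q hq) = 1 := by
  set f : ι → Bool → ℝ := fun i b =>
    (if i = x then (if b then (1:ℝ) else 0)/q else 1) *
    (if i = y then (if b then (1:ℝ) else 0)/q else 1) with hf
  have h : ∀ ω : ι → Bool, maskD q ω x * maskD q ω y = ∏ i, f i (ω i) := fun ω => by
    rw [hf]
    rw [Finset.prod_mul_distrib]
    rw [Finset.prod_eq_single x (fun i _ hi => by simp [hi]) (by simp),
      Finset.prod_eq_single y (fun i _ hi => by simp [hi]) (by simp)]
    simp [maskD, hxy, (Ne.symm hxy)]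
  calc ∫ ω, maskD q ω x * maskD q ω y ∂(bernoulliPi ι q hq)
      = ∫ ω, ∏ i, f i (ω i) ∂(bernoulliPi ι q hq) := by congr 1; funext ω; exact h ω
    _ = ∏ i, ∫ b, f i b
          ∂((PMF.bernoulli (Real.toNNReal q) (Real.toNNReal_le_one.mpr hq)).toMeasure) :=
        bernoulliPi_prod q hq f
    _ = 1 := by
        apply Finset.prod_eq_one
        intro i _
        rw [bern_integral q hq0.le hq]
        by_cases hix : i = x
        · subst hix
          simp only [hf, if_pos rfl, if_neg hxy, if_true, if_false, mul_one, Bool.false_eq_true]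
          field_simp
          ring
        · by_cases hiy : i = y
          · subst hiy
            simp only [hf, if_pos rfl, if_neg hix, if_true, if_false, one_mul, Bool.false_eq_true]
            field_simp
            ring
          · simp only [hf, if_neg hix, if_neg hiy, mul_one]
            ring

lemma integral_maskD_pair (q : ℝ) (hq0 : 0 < q) (hq : q ≤ 1) {x y : ι} (hxy : x ≠ y) (a b : ℝ) :
    ∫ ω, (maskD q ω x * a - maskD q ω y * b) ^ 2 ∂(bernoulliPi ι q hq)
      = (a - b) ^ 2 + (1/q - 1) * (a^2 + b^2) := by
  haveI : IsProbabilityMeasure (bernoulliPi ι q hq) := bernoulliPi_prob q hq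
  have key : ∀ ω : ι → Bool, (maskD q ω x * a - maskD q ω y * b) ^ 2
      = a^2 * (maskD q ω x)^2 + b^2 * (maskD q ω y)^2
        - (2*a*b) * (maskD q ω x * maskD q ω y) := fun ω => by ring
  calc ∫ ω, (maskD q ω x * a - maskD q ω y * b) ^ 2 ∂(bernoulliPi ι q hq)
      = ∫ ω, (a^2 * (maskD q ω x)^2 + b^2 * (maskD q ω y)^2
          - (2*a*b) * (maskD q ω x * maskD q ω y)) ∂(bernoulliPi ι q hq) := by
        congr 1; funext ω; exact key ω
    _ = (a^2 * (1/q) + b^2 * (1/q)) - (2*a*b) * 1 := by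
        rw [integral_sub Integrable.of_finite Integrable.of_finite,
          integral_add Integrable.of_finite Integrable.of_finite,
          MeasureTheory.integral_const_mul, MeasureTheory.integral_const_mul, MeasureTheory.integral_const_mul,
          integral_maskD_sq q hq0 hq, integral_maskD_sq q hq0 hq,
          integral_maskD_mul q hq0 hq hxy]
    _ = (a - b) ^ 2 + (1/q - 1) * (a^2 + b^2) := by ring

end Aux

lemma adjZ_symm (p r : ℤ × ℤ) : adjZ p r = adjZ r p := by
  simp [adjZ, abs_sub_comm]

lemma adj_ne {H W : ℕ} {x y : GridPt H W} (h : adjZ (gridZ x) (gridZ y) = true) : x ≠ y := by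
  rintro rfl
  simp [adjZ] at h

lemma expected_Eint {H W : ℕ} (c : ℤ × ℤ → ℤ × ℤ → ℝ)
    (hsym : ∀ p r : ℤ × ℤ, c p r = c r p)
    (q : ℝ) (hq0 : 0 < q) (hq1 : q ≤ 1) (h : GridPt H W → ℝ) :
    ∫ ω, Eint c (fun x => maskD q ω x * h x) ∂(bernoulliPi (GridPt H W) q hq1)
      = Eint c h + ((1/q - 1)/2) * ∑ x : GridPt H W, dInt c x * h x ^ 2 := by
  haveI : IsProbabilityMeasure (bernoulliPi (GridPt H W) q hq1) := bernoulliPi_prob q hq1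
  have step1 : ∫ ω, Eint c (fun x => maskD q ω x * h x) ∂(bernoulliPi (GridPt H W) q hq1)
      = (1/4) * ∑ x : GridPt H W, ∑ y : GridPt H W,
          (if adjZ (gridZ x) (gridZ y) then
            c (gridZ x) (gridZ y) * ((h x - h y)^2 + (1/q - 1) * (h x ^2 + h y ^2)) else 0) := by
    unfold Eint
    rw [MeasureTheory.integral_const_mul]
    congr 1
    rw [integral_finset_sum _ (fun x _ => Integrable.of_finite)]
    refine Finset.sum_congr rfl fun x _ => ?_
    rw [integral_finset_sum _ (fun y _ => Integrable.of_finite)]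
    refine Finset.sum_congr rfl fun y _ => ?_
    by_cases hadj : adjZ (gridZ x) (gridZ y)
    · simp only [if_pos hadj]
      rw [MeasureTheory.integral_const_mul,
        integral_maskD_pair q hq0 hq1 (adj_ne hadj) (h x) (h y)]
    · simp [hadj]
  rw [step1]
  have point : ∀ x y : GridPt H W,
      (if adjZ (gridZ x) (gridZ y) then
        c (gridZ x) (gridZ y) * ((h x - h y)^2 + (1/q - 1) * (h x ^2 + h y ^2)) else 0)
      = (if adjZ (gridZ x) (gridZ y) then c (gridZ x) (gridZ y) * (h x - h y)^2 else 0)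
        + (1/q - 1) * ((if adjZ (gridZ x) (gridZ y) then c (gridZ x) (gridZ y) else 0) * h x ^2)
        + (1/q - 1) * ((if adjZ (gridZ x) (gridZ y) then c (gridZ x) (gridZ y) else 0) * h y ^2) := by
    intro x y
    by_cases hadj : adjZ (gridZ x) (gridZ y) <;> simp [hadj] <;> ring
  simp_rw [point, Finset.sum_add_distrib]
  have hS2 : ∑ x : GridPt H W, ∑ y : GridPt H W,
      (1/q - 1) * ((if adjZ (gridZ x) (gridZ y) then c (gridZ x) (gridZ y) else 0) * h x ^2)
      = (1/q - 1) * ∑ x : GridPt H W, dInt c x * h x ^ 2 := by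
    rw [Finset.mul_sum]
    refine Finset.sum_congr rfl fun x _ => ?_
    rw [← Finset.mul_sum, ← Finset.sum_mul, dInt]
  have hS3 : ∑ x : GridPt H W, ∑ y : GridPt H W,
      (1/q - 1) * ((if adjZ (gridZ x) (gridZ y) then c (gridZ x) (gridZ y) else 0) * h y ^2)
      = (1/q - 1) * ∑ x : GridPt H W, dInt c x * h x ^ 2 := by
    rw [Finset.sum_comm, Finset.mul_sum]
    refine Finset.sum_congr rfl fun y _ => ?_
    rw [← Finset.mul_sum, ← Finset.sum_mul]
    congr 2
    rw [dInt]
    refine Finset.sum_congr rfl fun x _ => ?_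
    rw [adjZ_symm, hsym]
  rw [hS2, hS3, Eint]
  ring


/-- Late-stage mismatch of inverted dropout under coherence: if the
masses `∑_x d_x^int h_ℓ(x)²` stay bounded away from zero while `𝓔_int(h_ℓ) → 0`
(with `𝓔_int(h_ℓ) > 0` for every `ℓ`), then for any fixed `q ∈ (0,1)` the relative
expected intrinsic distortion
`(𝔼[𝓔_int(m_q ⊙ h_ℓ)] − 𝓔_int(h_ℓ)) / 𝓔_int(h_ℓ)` diverges to `+∞`. -/
theorem dropout_late_stage_mismatch {H W : ℕ}
    (c : ℤ × ℤ → ℤ × ℤ → ℝ)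
    (hsym : ∀ p q : ℤ × ℤ, c p q = c q p)
    (hpos : ∀ p q : ℤ × ℤ, adjZ p q → 0 < c p q)
    (q : ℝ) (hq0 : 0 < q) (hq1 : q < 1)
    (hseq : ℕ → GridPt H W → ℝ)
    (hmass : ∃ α : ℝ, 0 < α ∧
      ∀ ℓ : ℕ, α ≤ ∑ x : GridPt H W, dInt c x * (hseq ℓ x) ^ 2)
    (hEpos : ∀ ℓ : ℕ, 0 < Eint c (hseq ℓ))
    (hEto0 : Tendsto (fun ℓ : ℕ => Eint c (hseq ℓ)) atTop (nhds 0)) :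
    Tendsto
      (fun ℓ : ℕ =>
        ((∫ ω, Eint c (fun x => maskD q ω x * hseq ℓ x)
            ∂(bernoulliPi (GridPt H W) q hq1.le)) - Eint c (hseq ℓ)) /
          Eint c (hseq ℓ))
      atTop atTop := by
  obtain ⟨α, hα0, hαle⟩ := hmass
  have hk : 0 < (1/q - 1)/2 := by
    have : 1 < 1/q := one_lt_one_div hq0 hq1
    linarith
  have hmono : ∀ ℓ : ℕ, ((1/q - 1)/2 * α) / Eint c (hseq ℓ)
      ≤ ((∫ ω, Eint c (fun x => maskD q ω x * hseq ℓ x)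
            ∂(bernoulliPi (GridPt H W) q hq1.le)) - Eint c (hseq ℓ)) /
          Eint c (hseq ℓ) := by
    intro ℓ
    rw [expected_Eint c hsym q hq0 hq1.le (hseq ℓ), add_sub_cancel_left]
    gcongr
    · exact (hEpos ℓ).le
    · exact hαle ℓ
  have h1 : Tendsto (fun ℓ : ℕ => Eint c (hseq ℓ)) atTop (nhdsWithin 0 (Set.Ioi 0)) :=
    tendsto_nhdsWithin_iff.mpr ⟨hEto0, Eventually.of_forall fun ℓ => hEpos ℓ⟩
  have h2 : Tendsto (fun ℓ : ℕ => (Eint c (hseq ℓ))⁻¹) atTop atTop :=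
    h1.inv_tendsto_nhdsGT_zero
  have hdiv : Tendsto (fun ℓ : ℕ => ((1/q - 1)/2 * α) / Eint c (hseq ℓ)) atTop atTop := by
    simpa [div_eq_mul_inv] using h2.const_mul_atTop (by positivity : 0 < (1/q - 1)/2 * α)
  exact tendsto_atTop_mono hmono hdiv


end
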